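/- Let (x_k) solve the difference equation whose characteristic polynomial has distinct real roots λ_1,…,λ_n all satisfying ρ ≤ λ_i ≤ 1 (ρ > 0), with initial conditions x_0 = ⋯ = x_{n-2} = 0, x_{n-1} = 1. Then x_k ≥ C(k, n-1) ρ^{k-n+1} for all k ≥ n. -/

import Mathlib

open Polynomial

/-- Complete homogeneous symmetric function of a list of reals. -/
private def hp : List ℝ → ℕ → ℝ
  | [], m => if m = 0 then 1 else 0
  | a :: l, m => ∑ p ∈ Finset.range (m + 1), a ^ p * hp l (m - p)

private lemma hp_zero : ∀ l : List ℝ, hp l 0 = 1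
  | [] => by simp [hp]
  | a :: l => by simp [hp, hp_zero l]

private lemma hp_rec (a : ℝ) (l : List ℝ) (m : ℕ) :
    hp (a :: l) (m + 1) = a * hp (a :: l) m + hp l (m + 1) := by
  have h1 : hp (a :: l) (m+1) = ∑ p ∈ Finset.range (m + 2), a ^ p * hp l (m + 1 - p) := rfl
  have h2 : hp (a :: l) m = ∑ p ∈ Finset.range (m + 1), a ^ p * hp l (m - p) := rfl
  rw [h1, Finset.sum_range_succ', h2, Finset.mul_sum]
  simp only [pow_zero, one_mul, Nat.sub_zero, Nat.succ_sub_succ]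
  congr 1
  apply Finset.sum_congr rfl
  intro p _
  ring

private lemma hp_single (a : ℝ) : ∀ m, hp [a] m = a ^ m := by
  intro m
  induction m with
  | zero => simpa using hp_zero [a]
  | succ m ih =>
      rw [hp_rec, ih]
      have : hp ([] : List ℝ) (m+1) = 0 := by simp [hp]
      rw [this]; ring

private lemma hp_lb (ρ : ℝ) (hρ : 0 < ρ) :
    ∀ N m a (l : List ℝ), m + l.length ≤ N → (∀ b ∈ a :: l, ρ ≤ b) →
      ((m + l.length).choose l.length : ℝ) * ρ ^ m ≤ hp (a :: l) m := by
  intro N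
  induction N with
  | zero =>
      intro m a l hm hb
      have hm0 : m = 0 := by omega
      have hl0 : l = [] := by
        cases l with
        | nil => rfl
        | cons c l => simp at hm
      subst hm0; subst hl0
      simp [hp_zero]
  | succ N ih =>
      intro m a l hm hb
      match m, l with
      | 0, l => simp [hp_zero]
      | m + 1, [] =>
          rw [hp_single]
          simp only [List.length_nil, Nat.add_zero, Nat.choose_zero_right, Nat.cast_one, one_mul]
          have ha : ρ ≤ a := hb a (by simp)
          exact pow_le_pow_left₀ hρ.le ha (m + 1)
      | m + 1, b :: l' =>
          have hb' : ∀ c ∈ b :: l', ρ ≤ c := fun c hc => hb c (List.mem_cons_of_mem a hc)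
          have IH1 := ih m a (b :: l') (by simp at hm ⊢; omega) hb
          have IH2 := ih (m + 1) b l' (by simp at hm ⊢; omega) hb'
          rw [hp_rec]
          have ha : ρ ≤ a := hb a (by simp)
          have hnn : (0:ℝ) ≤ ((m + (b :: l').length).choose (b :: l').length : ℝ) * ρ ^ m :=
            mul_nonneg (Nat.cast_nonneg _) (pow_nonneg hρ.le m)
          have h1 : ρ * (((m + (b :: l').length).choose (b :: l').length : ℝ) * ρ ^ m)
              ≤ a * hp (a :: b :: l') m := by
            apply mul_le_mul ha IH1 hnn (le_trans hρ.le ha)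
          have keyN : (m + 1 + (l'.length + 1)).choose (l'.length + 1)
              = (m + (l'.length + 1)).choose (l'.length + 1)
                + (m + 1 + l'.length).choose l'.length := by
            have h := Nat.choose_succ_succ (m + 1 + l'.length) l'.length
            rw [show m + 1 + (l'.length + 1) = m + 1 + l'.length + 1 by omega, h,
              show m + (l'.length + 1) = m + 1 + l'.length by omega]
            simp only [Nat.succ_eq_add_one]
            omega
          simp only [List.length_cons] at h1 hnn ⊢
          rw [keyN]
          push_cast
          have hpow : ρ * ((((m + (l'.length + 1)).choose (l'.length + 1)) : ℝ) * ρ ^ m)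
              = (((m + (l'.length + 1)).choose (l'.length + 1)) : ℝ) * ρ ^ (m + 1) := by ring
          linarith [IH2, h1, hpow]

private noncomputable def charP (l : List ℝ) : Polynomial ℝ := (l.map fun a => X - C a).prod

private lemma charP_monic : ∀ l : List ℝ, (charP l).Monic
  | [] => by simpa [_root_.charP] using monic_one
  | a :: l => by
      rw [_root_.charP, List.map_cons, List.prod_cons]
      exact (monic_X_sub_C a).mul (charP_monic l)

private lemma charP_natDegree : ∀ l : List ℝ, (charP l).natDegree = l.length
  | [] => by simp [_root_.charP]
  | a :: l => by
      rw [_root_.charP, List.map_cons, List.prod_cons, ← _root_.charP]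
      rw [Polynomial.Monic.natDegree_mul (monic_X_sub_C a) (charP_monic l)]
      simp [natDegree_X_sub_C, charP_natDegree l]
      omega

private lemma shift_sum (a : ℝ) (Q : Polynomial ℝ) (t : ℕ) (hQ : Q.natDegree ≤ t)
    (x : ℕ → ℝ) (k : ℕ) :
    ∑ j ∈ Finset.range (t + 2), ((X - C a) * Q).coeff j * x (k + j)
      = ∑ i ∈ Finset.range (t + 1), Q.coeff i * (x (k + (i + 1)) - a * x (k + i)) := by
  have expand : ∀ j, ((X - C a) * Q).coeff j * x (k + j)
      = (X * Q).coeff j * x (k + j) - a * (Q.coeff j * x (k + j)) := by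
    intro j
    rw [sub_mul, coeff_sub, coeff_C_mul]
    ring
  simp only [expand]
  rw [Finset.sum_sub_distrib]
  have h1 : ∑ j ∈ Finset.range (t + 2), (X * Q).coeff j * x (k + j)
      = ∑ i ∈ Finset.range (t + 1), Q.coeff i * x (k + (i + 1)) := by
    rw [Finset.sum_range_succ']
    simp [coeff_X_mul, Polynomial.mul_coeff_zero]
  have h2 : ∑ j ∈ Finset.range (t + 2), a * (Q.coeff j * x (k + j))
      = ∑ j ∈ Finset.range (t + 1), a * (Q.coeff j * x (k + j)) := by
    rw [Finset.sum_range_succ]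
    have : Q.coeff (t + 1) = 0 := coeff_eq_zero_of_natDegree_lt (by omega)
    simp [this]
  rw [h1, h2, ← Finset.sum_sub_distrib]
  apply Finset.sum_congr rfl
  intro i _
  ring

/-- the candidate solution: zeros then complete homogeneous sums -/
private noncomputable def vseq (l : List ℝ) (k : ℕ) : ℝ :=
  if k + 1 < l.length then 0 else hp l (k + 1 - l.length)

private lemma vstep (a b : ℝ) (l' : List ℝ) (k : ℕ) :
    vseq (a :: b :: l') (k + 1) - a * vseq (a :: b :: l') k = vseq (b :: l') k := by
  set s := l'.length with hs
  have hlen1 : (a :: b :: l').length = s + 2 := by simp [hs]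
  have hlen2 : (b :: l').length = s + 1 := by simp [hs]
  unfold vseq
  rw [hlen1, hlen2]
  rcases lt_trichotomy k s with h | h | h
  · rw [if_pos (by omega), if_pos (by omega), if_pos (by omega)]
    ring
  · subst h
    rw [if_neg (by omega), if_pos (by omega), if_neg (by omega)]
    rw [show s + 1 + 1 - (s + 2) = 0 by omega, show s + 1 - (s + 1) = 0 by omega]
    rw [hp_zero, hp_zero]
    ring
  · obtain ⟨d, rfl⟩ : ∃ d, k = s + 1 + d := ⟨k - (s + 1), by omega⟩
    rw [if_neg (by omega), if_neg (by omega), if_neg (by omega)]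
    rw [show s + 1 + d + 1 + 1 - (s + 2) = d + 1 by omega,
        show s + 1 + d + 1 - (s + 2) = d by omega,
        show s + 1 + d + 1 - (s + 1) = d + 1 by omega]
    have := hp_rec a (b :: l') d
    linarith [this]

private lemma vseq_ann : ∀ (l' : List ℝ) (a : ℝ) (k : ℕ),
    ∑ j ∈ Finset.range ((a :: l').length + 1),
      (charP (a :: l')).coeff j * vseq (a :: l') (k + j) = 0 := by
  intro l'
  induction l' with
  | nil =>
      intro a k
      have hv : ∀ m, vseq [a] m = a ^ m := by
        intro m
        unfold vseq
        rw [if_neg (by simp), hp_single]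
        simp
      simp only [List.length_cons, List.length_nil]
      rw [Finset.sum_range_succ, Finset.sum_range_succ, Finset.sum_range_zero]
      have hc : charP [a] = X - C a := by simp [_root_.charP]
      rw [hc, hv, hv]
      simp [coeff_X_zero, coeff_C, coeff_X_one]
      ring
  | cons b l' ih =>
      intro a k
      have hc : charP (a :: b :: l') = (X - C a) * charP (b :: l') := by
        rw [_root_.charP, List.map_cons, List.prod_cons, ← _root_.charP]
      have hdeg : (charP (b :: l')).natDegree ≤ (b :: l').length :=
        le_of_eq (charP_natDegree _)
      have hlen : (a :: b :: l').length + 1 = (b :: l').length + 2 := by simp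
      rw [hlen, hc, shift_sum a _ _ hdeg]
      have : ∀ i, vseq (a :: b :: l') (k + i + 1) - a * vseq (a :: b :: l') (k + i)
          = vseq (b :: l') (k + i) := fun i => vstep a b l' (k + i)
      calc ∑ i ∈ Finset.range ((b :: l').length + 1),
            (charP (b :: l')).coeff i * (vseq (a :: b :: l') (k + (i + 1))
              - a * vseq (a :: b :: l') (k + i))
          = ∑ i ∈ Finset.range ((b :: l').length + 1),
            (charP (b :: l')).coeff i * vseq (b :: l') (k + i) := by
            apply Finset.sum_congr rfl
            intro i _
            rw [show k + (i + 1) = k + i + 1 by omega, this i]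
        _ = 0 := ih b k

/-- Lower bound: distinct real roots in [ρ,1], ρ > 0, initial conditions (0,…,0,1)
    imply x_k ≥ C(k,n-1) ρ^{k-n+1}. -/
theorem stmt14 (n : ℕ) (hn : 1 ≤ n) (ρ : ℝ) (hρ : 0 < ρ) (L : Fin n → ℝ)
    (hinj : Function.Injective L) (hL : ∀ i, ρ ≤ L i ∧ L i ≤ 1) (x : ℕ → ℝ)
    (hrec : ∀ k : ℕ,
      ∑ j ∈ Finset.range (n + 1),
        (∏ i, (Polynomial.X - Polynomial.C (L i))).coeff j * x (k + j) = 0)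
    (hinit0 : ∀ i : ℕ, i < n - 1 → x i = 0) (hinit1 : x (n - 1) = 1) :
    ∀ k : ℕ, n ≤ k → x k ≥ (k.choose (n - 1) : ℝ) * ρ ^ (k + 1 - n) := by
  classical
  obtain ⟨a, l', hl⟩ : ∃ a l', List.ofFn L = a :: l' := by
    cases h : List.ofFn L with
    | nil =>
        exfalso
        have h2 := List.length_ofFn (f := L)
        rw [h] at h2
        simp at h2
        omega
    | cons a l' => exact ⟨a, l', rfl⟩
  have hlen : (a :: l').length = n := by rw [← hl]; exact List.length_ofFn (f := L)
  have hlen' : l'.length + 1 = n := by simpa using hlen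
  have hP : (∏ i, (Polynomial.X - Polynomial.C (L i))) = charP (a :: l') := by
    rw [_root_.charP, ← hl, List.map_ofFn, List.prod_ofFn]
    rfl
  have hmem : ∀ b ∈ a :: l', ρ ≤ b := by
    intro b hb
    rw [← hl, List.mem_ofFn] at hb
    obtain ⟨i, rfl⟩ := hb
    exact (hL i).1
  have hco : (charP (a :: l')).coeff n = 1 := by
    have hm := charP_monic (a :: l')
    have hd := charP_natDegree (a :: l')
    rw [← hlen, ← hd]
    exact hm.coeff_natDegree
  have main : ∀ k, x k = vseq (a :: l') k := by
    intro k
    induction k using Nat.strong_induction_on with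
    | _ k IH =>
      rcases lt_or_ge k n with hk | hk
      · rcases Nat.lt_or_ge (k + 1) n with hk1 | hk1
        · rw [hinit0 k (by omega)]
          unfold vseq
          rw [if_pos (by simp only [List.length_cons]; omega)]
        · have hkeq : k = n - 1 := by omega
          rw [hkeq, hinit1]
          unfold vseq
          rw [if_neg (by simp only [List.length_cons]; omega),
            show n - 1 + 1 - (a :: l').length = 0 by simp only [List.length_cons]; omega,
            hp_zero]
      · have h1 := hrec (k - n)
        rw [hP] at h1
        have h2 := vseq_ann l' a (k - n)
        rw [hlen] at h2
        rw [Finset.sum_range_succ, hco] at h1 h2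
        have hx' : ∀ j ∈ Finset.range n,
            (charP (a :: l')).coeff j * x (k - n + j)
              = (charP (a :: l')).coeff j * vseq (a :: l') (k - n + j) := by
          intro j hj
          rw [Finset.mem_range] at hj
          rw [IH (k - n + j) (by omega)]
        rw [Finset.sum_congr rfl hx'] at h1
        have he : k - n + n = k := by omega
        rw [he] at h1 h2
        linarith
  intro k hk
  rw [main k]
  unfold vseq
  rw [if_neg (by simp only [List.length_cons]; omega), hlen]
  have hb := hp_lb ρ hρ ((k + 1 - (a :: l').length) + l'.length)
    (k + 1 - (a :: l').length) a l' le_rfl hmem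
  have e2 : ((k + 1 - (a :: l').length) + l'.length).choose l'.length = k.choose (n - 1) := by
    rw [hlen, show l'.length = n - 1 by omega, show k + 1 - n + (n - 1) = k by omega]
  rw [e2, hlen] at hb
  exact hb
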